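/- With the same setup (f β-smooth, Δ = f(y+δv) - f(y-δv) - 2δ⟨m,v⟩, ĝ = m + (d/(2δ))Δ v, v uniform on S^{d-1}), the bias b = E[ĝ] - ∇f(y) satisfies ‖b‖ ≤ (d/2) β δ. -/

import Mathlib

open MeasureTheory
open scoped RealInnerProductSpace

theorem my_sphere_ae {d : ℕ} (μ : Measure (EuclideanSpace ℝ (Fin d))) [IsProbabilityMeasure μ]
    (hsupp : μ (Metric.sphere (0 : EuclideanSpace ℝ (Fin d)) 1) = 1) :
    ∀ᵐ v ∂μ, ‖v‖ = 1 := by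
  have h : μ (Metric.sphere (0 : EuclideanSpace ℝ (Fin d)) 1)ᶜ = 0 := by
    rw [prob_compl_eq_zero_iff Metric.isClosed_sphere.measurableSet]
    exact hsupp
  have : ∀ᵐ v ∂μ, v ∈ Metric.sphere (0 : EuclideanSpace ℝ (Fin d)) 1 :=
    (MeasureTheory.mem_ae_iff.mpr h)
  filter_upwards [this] with v hv
  simpa [Metric.mem_sphere, dist_zero_right] using hv

theorem my_integrable {d : ℕ} (μ : Measure (EuclideanSpace ℝ (Fin d))) [IsProbabilityMeasure μ]
    (hsupp : μ (Metric.sphere (0 : EuclideanSpace ℝ (Fin d)) 1) = 1)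
    {F : Type*} [NormedAddCommGroup F] (g : EuclideanSpace ℝ (Fin d) → F)
    (hg : Continuous g) : Integrable g μ := by
  obtain ⟨C, hC⟩ := (isCompact_sphere (0 : EuclideanSpace ℝ (Fin d)) 1).exists_bound_of_continuousOn
    hg.continuousOn
  have hae : ∀ᵐ v ∂μ, ‖g v‖ ≤ C := by
    filter_upwards [my_sphere_ae μ hsupp] with v hv
    exact hC v (by simpa [Metric.mem_sphere, dist_zero_right] using hv)
  exact (integrable_const C).mono' hg.aestronglyMeasurable hae

theorem my_taylor {E : Type*} [NormedAddCommGroup E] [InnerProductSpace ℝ E] [CompleteSpace E]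
    (f : E → ℝ) (β : ℝ) (hβ0 : 0 ≤ β)
    (hf : Differentiable ℝ f) (hβ : ∀ x y, ‖gradient f x - gradient f y‖ ≤ β * ‖x - y‖)
    (x h : E) : |f (x + h) - f x - ⟪gradient f x, h⟫| ≤ β / 2 * ‖h‖ ^ 2 := by
  have hgrad : ∀ z w, fderiv ℝ f z w = ⟪gradient f z, w⟫ := by
    intro z w
    rw [((hf z).hasGradientAt.hasFDerivAt).fderiv]
    simp [InnerProductSpace.toDual_apply_apply]
  have hgc : Continuous (gradient f) := by
    have : LipschitzWith β.toNNReal (gradient f) := by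
      intro a b
      rw [edist_nndist, edist_nndist, ← ENNReal.coe_mul, ENNReal.coe_le_coe,
        ← NNReal.coe_le_coe]
      push_cast
      calc (nndist (gradient f a) (gradient f b) : ℝ) = ‖gradient f a - gradient f b‖ := by
            rw [coe_nndist, dist_eq_norm]
          _ ≤ β * ‖a - b‖ := hβ a b
          _ = β.toNNReal * (nndist a b : ℝ) := by
            rw [Real.coe_toNNReal β hβ0, coe_nndist, dist_eq_norm]
    exact this.continuous
  -- derivative of t ↦ f (x + t • h)
  have hd : ∀ t : ℝ, HasDerivAt (fun t : ℝ => f (x + t • h)) ⟪gradient f (x + t • h), h⟫ t := by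
    intro t
    have hc : HasDerivAt (fun t : ℝ => x + t • h) h t := by
      simpa using ((hasDerivAt_id t).smul_const h).const_add x
    have := (hf (x + t • h)).hasFDerivAt.comp_hasDerivAt t hc
    rw [hgrad] at this
    exact this
  have hgcont : Continuous fun t : ℝ => ⟪gradient f (x + t • h), h⟫ := by
    exact (hgc.comp (by continuity)).inner continuous_const
  have hftc : f (x + h) - f x = ∫ t in (0:ℝ)..1, ⟪gradient f (x + t • h), h⟫ := by
    rw [intervalIntegral.integral_eq_sub_of_hasDerivAt (fun t _ => hd t)
      (hgcont.intervalIntegrable 0 1)]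
    simp
  have key : f (x + h) - f x - ⟪gradient f x, h⟫
      = ∫ t in (0:ℝ)..1, (⟪gradient f (x + t • h), h⟫ - ⟪gradient f x, h⟫) := by
    rw [intervalIntegral.integral_sub (hgcont.intervalIntegrable 0 1)
      ((continuous_const.intervalIntegrable 0 1)), ← hftc]
    simp
  rw [key]
  have hbound : ∀ t ∈ Set.uIoc (0:ℝ) 1,
      ‖⟪gradient f (x + t • h), h⟫ - ⟪gradient f x, h⟫‖ ≤ β * ‖h‖ ^ 2 * t := by
    intro t ht
    rw [Set.mem_uIoc] at ht
    have ht' : 0 < t ∧ t ≤ 1 := by rcases ht with ht | ht <;> [exact ⟨ht.1, ht.2⟩; linarith [ht.1, ht.2]]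
    calc ‖⟪gradient f (x + t • h), h⟫ - ⟪gradient f x, h⟫‖
        = ‖⟪gradient f (x + t • h) - gradient f x, h⟫‖ := by rw [← inner_sub_left]
      _ ≤ ‖gradient f (x + t • h) - gradient f x‖ * ‖h‖ := norm_inner_le_norm _ _
      _ ≤ (β * ‖x + t • h - x‖) * ‖h‖ := by
          gcongr; exact hβ _ _
      _ = β * ‖h‖ ^ 2 * t := by
          rw [add_sub_cancel_left, norm_smul, Real.norm_eq_abs, abs_of_pos ht'.1]; ring
  have := intervalIntegral.norm_integral_le_of_norm_le (a := 0) (b := 1) (μ := volume) (f := fun t =>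
      ⟪gradient f (x + t • h), h⟫ - ⟪gradient f x, h⟫) (g := fun t => β * ‖h‖ ^ 2 * t) zero_le_one
    (by refine Filter.Eventually.of_forall (fun t ht => hbound t ?_); rw [Set.uIoc_of_le zero_le_one]; exact ht)
    ((continuous_const.mul continuous_id).intervalIntegrable 0 1)
  rw [Real.norm_eq_abs] at this
  refine this.trans ?_
  rw [intervalIntegral.integral_const_mul, integral_id]
  linarith

theorem my_moment {d : ℕ} (hd : 0 < d)
    (μ : Measure (EuclideanSpace ℝ (Fin d))) [IsProbabilityMeasure μ]
    (hsupp : μ (Metric.sphere (0 : EuclideanSpace ℝ (Fin d)) 1) = 1)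
    (hinv : ∀ e : EuclideanSpace ℝ (Fin d) ≃ₗᵢ[ℝ] EuclideanSpace ℝ (Fin d),
      Measure.map e μ = μ)
    (a : EuclideanSpace ℝ (Fin d)) :
    ∫ v, ⟪a, v⟫ • v ∂μ = ((d : ℝ))⁻¹ • a := by
  have hcoord : ∀ i : Fin d, Continuous fun v : EuclideanSpace ℝ (Fin d) => v i := by
    intro i
    simpa using (EuclideanSpace.proj i : EuclideanSpace ℝ (Fin d) →L[ℝ] ℝ).continuous
  have hcont : ∀ i j : Fin d, Continuous fun v : EuclideanSpace ℝ (Fin d) => v i * v j :=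
    fun i j => (hcoord i).mul (hcoord j)
  have hmap : ∀ (e : EuclideanSpace ℝ (Fin d) ≃ₗᵢ[ℝ] EuclideanSpace ℝ (Fin d))
      (g : EuclideanSpace ℝ (Fin d) → ℝ), Continuous g →
      ∫ v, g v ∂μ = ∫ v, g (e v) ∂μ := by
    intro e g hg
    conv_lhs => rw [← hinv e]
    exact integral_map e.continuous.measurable.aemeasurable hg.aestronglyMeasurable
  -- off-diagonal moments vanish
  have hIoff : ∀ i j : Fin d, i ≠ j → ∫ v, v i * v j ∂μ = 0 := by
    intro i j hij
    set e := LinearIsometryEquiv.piLpCongrRight 2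
      (fun k : Fin d => if k = i then LinearIsometryEquiv.neg ℝ (E := ℝ) else
        LinearIsometryEquiv.refl ℝ ℝ) with he
    have happ : ∀ (v : EuclideanSpace ℝ (Fin d)) (k : Fin d),
        e v k = if k = i then -v k else v k := by
      intro v k
      have : e v k = (if k = i then LinearIsometryEquiv.neg ℝ (E := ℝ) else
          LinearIsometryEquiv.refl ℝ ℝ) (v k) := rfl
      rw [this, apply_ite (fun φ : ℝ ≃ₗᵢ[ℝ] ℝ => φ (v k))]
      by_cases h : k = i <;> simp [h]
    have h1 := hmap e (fun v => v i * v j) (hcont i j)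
    have h2 : (∫ v, e v i * e v j ∂μ) = ∫ v, -(v i * v j) ∂μ := by
      congr 1; funext v
      rw [happ, happ]
      simp [hij.symm]
    rw [h2, integral_neg] at h1
    linarith
  -- diagonal moments are all equal
  have hIdiag : ∀ i j : Fin d, ∫ v, v i * v i ∂μ = ∫ v, v j * v j ∂μ := by
    intro i j
    set e := LinearIsometryEquiv.piLpCongrLeft 2 ℝ ℝ (Equiv.swap i j) with he
    have happ : ∀ (v : EuclideanSpace ℝ (Fin d)), e v i = v j := by
      intro v
      simp only [he, LinearIsometryEquiv.piLpCongrLeft_apply, Equiv.piCongrLeft'_apply,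
        Equiv.symm_swap]
      rw [Equiv.swap_apply_left]
    have h1 := hmap e (fun v => v i * v i) (hcont i i)
    simpa [happ] using h1
  -- sum of diagonal moments is 1
  have hsum : ∑ i : Fin d, ∫ v, v i * v i ∂μ = 1 := by
    rw [← integral_finset_sum _ (fun i _ => my_integrable μ hsupp _ (hcont i i))]
    have : ∫ v, (∑ i : Fin d, v i * v i) ∂μ = ∫ v, (1 : ℝ) ∂μ := by
      refine integral_congr_ae ?_
      filter_upwards [my_sphere_ae μ hsupp] with v hv
      have : ∑ i : Fin d, v i * v i = ⟪v, v⟫ := by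
        simp only [PiLp.inner_apply, RCLike.inner_apply, conj_trivial]
      rw [this, real_inner_self_eq_norm_sq, hv]
      norm_num
    rw [this]
    simp
  -- hence each diagonal moment is 1/d
  have hIdiag' : ∀ j : Fin d, ∫ v, v j * v j ∂μ = (d : ℝ)⁻¹ := by
    intro j
    have : ∑ i : Fin d, ∫ v, v i * v i ∂μ = (d : ℝ) * ∫ v, v j * v j ∂μ := by
      rw [Finset.sum_congr rfl (fun i _ => hIdiag i j)]
      simp [mul_comm]
    rw [this] at hsum
    field_simp at hsum ⊢
    linarith
  -- conclude componentwise
  have hint : Integrable (fun v : EuclideanSpace ℝ (Fin d) => ⟪a, v⟫ • v) μ := by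
    refine my_integrable μ hsupp _ ?_
    exact (continuous_const.inner continuous_id).fun_smul continuous_id
  have hcomp : ∀ j : Fin d, (∫ v, ⟪a, v⟫ • v ∂μ) j = ∫ v, ⟪a, v⟫ * v j ∂μ := by
    intro j
    have := ((EuclideanSpace.proj j : EuclideanSpace ℝ (Fin d) →L[ℝ] ℝ)).integral_comp_comm hint
    simpa using this.symm
  refine PiLp.ext fun j => ?_
  rw [hcomp j]
  have expand : (fun v : EuclideanSpace ℝ (Fin d) => ⟪a, v⟫ * v j)
      = fun v => ∑ i : Fin d, a i * (v i * v j) := by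
    funext v
    simp [PiLp.inner_apply, RCLike.inner_apply, Finset.sum_mul, mul_assoc, mul_left_comm]
  rw [expand, integral_finset_sum _ (fun i _ => (my_integrable μ hsupp _
    (continuous_const.fun_mul (hcont i j))))]
  have : ∀ i : Fin d, ∫ v, a i * (v i * v j) ∂μ = a i * ∫ v, v i * v j ∂μ := by
    intro i; exact MeasureTheory.integral_const_mul _ _
  simp_rw [this]
  rw [Finset.sum_eq_single j]
  · rw [hIdiag' j]
    simp [mul_comm]
  · intro i _ hij
    rw [hIoff i j hij]
    simp
  · intro hj; exact absurd (Finset.mem_univ j) hj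

/-- With `f` `β`-smooth, `Δ = f(y+δv) - f(y-δv) - 2δ⟨m,v⟩`,
`ĝ = m + (d/(2δ)) Δ v` and `v` uniform on `S^{d-1}`, the bias `b = E[ĝ] - ∇f(y)`
satisfies `‖b‖ ≤ (d/2) β δ`. -/
theorem bias_variance_reduced_estimator {d : ℕ} (hd : 0 < d)
    (μ : Measure (EuclideanSpace ℝ (Fin d))) [IsProbabilityMeasure μ]
    (hsupp : μ (Metric.sphere (0 : EuclideanSpace ℝ (Fin d)) 1) = 1)
    (hinv : ∀ e : EuclideanSpace ℝ (Fin d) ≃ₗᵢ[ℝ] EuclideanSpace ℝ (Fin d),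
      Measure.map e μ = μ)
    (f : EuclideanSpace ℝ (Fin d) → ℝ) (β δ : ℝ) (hδ : 0 < δ)
    (hf : Differentiable ℝ f)
    (hβ : ∀ x y, ‖gradient f x - gradient f y‖ ≤ β * ‖x - y‖)
    (y m : EuclideanSpace ℝ (Fin d)) :
    ‖(∫ v, (m + (((d : ℝ) / (2 * δ)) *
        (f (y + δ • v) - f (y - δ • v) - 2 * δ * ⟪m, v⟫)) • v) ∂μ) - gradient f y‖
      ≤ ((d : ℝ) / 2) * β * δ := by
  have hβ0 : 0 ≤ β := by
    have h1 := hβ (EuclideanSpace.single (⟨0, hd⟩ : Fin d) (1 : ℝ)) 0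
    have h2 : ‖EuclideanSpace.single (⟨0, hd⟩ : Fin d) (1 : ℝ) - 0‖ = 1 := by
      simp [EuclideanSpace.norm_single]
    rw [h2, mul_one] at h1
    exact le_trans (norm_nonneg _) h1
  set G := gradient f y with hG
  set c := (d : ℝ) / (2 * δ) with hc
  set T := fun v : EuclideanSpace ℝ (Fin d) =>
    (c * (f (y + δ • v) - f (y - δ • v) - 2 * δ * ⟪G, v⟫)) • v with hT
  have hfc : Continuous f := hf.continuous
  have hTcont : Continuous T := by
    apply Continuous.fun_smul _ continuous_id
    apply continuous_const.mul
    apply Continuous.sub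
    · exact (hfc.comp (continuous_const.add (continuous_const.fun_smul continuous_id : Continuous fun v : EuclideanSpace ℝ (Fin d) => δ • v))).sub
        (hfc.comp (continuous_const.sub (continuous_const.fun_smul continuous_id : Continuous fun v : EuclideanSpace ℝ (Fin d) => δ • v)))
    · exact continuous_const.mul (continuous_const.inner continuous_id)
  have hintT : Integrable T μ := my_integrable μ hsupp T hTcont
  have hint2 : Integrable (fun v : EuclideanSpace ℝ (Fin d) => ⟪G - m, v⟫ • v) μ :=
    my_integrable μ hsupp _ ((continuous_const.inner continuous_id).fun_smul continuous_id)
  have hint2' : Integrable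
      (fun v : EuclideanSpace ℝ (Fin d) => m + ((d : ℝ) • (⟪G - m, v⟫ • v))) μ :=
    (integrable_const m).add (hint2.smul (d : ℝ))
  have heq : (fun v : EuclideanSpace ℝ (Fin d) => m +
      (c * (f (y + δ • v) - f (y - δ • v) - 2 * δ * ⟪m, v⟫)) • v)
      = fun v => T v + (m + ((d : ℝ) • (⟪G - m, v⟫ • v))) := by
    funext v
    have hδ' : δ ≠ 0 := hδ.ne'
    have key : c * (f (y + δ • v) - f (y - δ • v) - 2 * δ * ⟪m, v⟫)
        = c * (f (y + δ • v) - f (y - δ • v) - 2 * δ * ⟪G, v⟫)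
          + (d : ℝ) * (⟪G, v⟫ - ⟪m, v⟫) := by
      rw [hc]; field_simp; ring
    rw [hT]
    simp only [inner_sub_left, smul_smul]
    rw [key, add_smul]
    abel
  have hint2s : Integrable (fun v : EuclideanSpace ℝ (Fin d) =>
      (d : ℝ) • (⟪G - m, v⟫ • v)) μ := hint2.smul (d : ℝ)
  rw [heq, integral_add hintT hint2', integral_add (integrable_const m) hint2s,
    integral_const, integral_smul, my_moment hd μ hsupp hinv (G - m)]
  have hd' : ((d : ℝ)) ≠ 0 := Nat.cast_ne_zero.mpr hd.ne'
  have hsimp : (d : ℝ) • ((d : ℝ))⁻¹ • (G - m) = G - m := by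
    rw [smul_smul, mul_inv_cancel₀ hd', one_smul]
  rw [hsimp]
  have hmeas : μ.real Set.univ • m + (G - m) = G := by
    simp [measure_univ]
  rw [hmeas]
  have : ∫ v, T v ∂μ + G - G = ∫ v, T v ∂μ := by abel
  rw [this]
  -- now bound the integral of T
  have hbound : ∀ᵐ v ∂μ, ‖T v‖ ≤ ((d : ℝ) / 2) * β * δ := by
    filter_upwards [my_sphere_ae μ hsupp] with v hv
    have ht1 := my_taylor f β hβ0 hf hβ y (δ • v)
    have ht2 := my_taylor f β hβ0 hf hβ y (-(δ • v))
    have hn : ‖δ • v‖ = δ := by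
      rw [norm_smul, hv, Real.norm_eq_abs, abs_of_pos hδ, mul_one]
    rw [hn] at ht1
    rw [norm_neg, hn] at ht2
    have hi1 : ⟪G, δ • v⟫ = δ * ⟪G, v⟫ := real_inner_smul_right _ _ _
    have hi2 : ⟪G, -(δ • v)⟫ = -(δ * ⟪G, v⟫) := by
      rw [inner_neg_right, hi1]
    have hX : |f (y + δ • v) - f (y - δ • v) - 2 * δ * ⟪G, v⟫| ≤ β * δ ^ 2 := by
      have hrw : f (y + δ • v) - f (y - δ • v) - 2 * δ * ⟪G, v⟫
          = (f (y + δ • v) - f y - ⟪G, δ • v⟫) - (f (y + -(δ • v)) - f y - ⟪G, -(δ • v)⟫) := by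
        rw [hi1, hi2]
        have : y - δ • v = y + -(δ • v) := by abel
        rw [← this]
        ring
      rw [hrw]
      calc |(f (y + δ • v) - f y - ⟪G, δ • v⟫) - (f (y + -(δ • v)) - f y - ⟪G, -(δ • v)⟫)|
          ≤ |f (y + δ • v) - f y - ⟪G, δ • v⟫| + |f (y + -(δ • v)) - f y - ⟪G, -(δ • v)⟫| :=
            abs_sub _ _
        _ ≤ β / 2 * δ ^ 2 + β / 2 * δ ^ 2 := add_le_add ht1 ht2
        _ = β * δ ^ 2 := by ring
    have hc0 : 0 ≤ c := by
      rw [hc]; positivity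
    calc ‖T v‖ = |c * (f (y + δ • v) - f (y - δ • v) - 2 * δ * ⟪G, v⟫)| * ‖v‖ := by
          rw [hT]; rw [norm_smul, Real.norm_eq_abs]
      _ = c * |f (y + δ • v) - f (y - δ • v) - 2 * δ * ⟪G, v⟫| := by
          rw [hv, mul_one, abs_mul, abs_of_nonneg hc0]
      _ ≤ c * (β * δ ^ 2) := by
          exact mul_le_mul_of_nonneg_left hX hc0
      _ = ((d : ℝ) / 2) * β * δ := by
          rw [hc]; field_simp
  have := norm_integral_le_of_norm_le_const (μ := μ) hbound
  simpa [measure_univ] using this
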